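/- Let G = C_n(S_1) and H = C_m(S_2) be circulant graphs. Then the lexicographical product G[H] is isomorphic to a circulant graph; that is, there exists a set S ⊆ {1, …, ⌊nm/2⌋} such that G[H] ≅ C_{nm}(S). -/

import Mathlib

open Finset

variable {V : Type*}

/-- A facet of a collection of faces `Δ` is a maximal face. -/
def IsFacet (Δ : Set (Finset V)) (F : Finset V) : Prop :=
  F ∈ Δ ∧ ∀ G ∈ Δ, F ⊆ G → F = G

/-- A complex is pure if all facets have the same cardinality. -/
def IsPure (Δ : Set (Finset V)) : Prop :=
  ∀ F G, IsFacet Δ F → IsFacet Δ G → F.card = G.card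

/-- Deletion of a vertex from a complex. -/
def del (Δ : Set (Finset V)) (x : V) : Set (Finset V) := {F ∈ Δ | x ∉ F}

/-- Link of a vertex in a complex. -/
def link [DecidableEq V] (Δ : Set (Finset V)) (x : V) : Set (Finset V) :=
  {F ∈ Δ | x ∉ F ∧ insert x F ∈ Δ}

/-- `F : Fin s → Finset V` is a shelling order of the facets of `Δ`. -/
def IsShelling [DecidableEq V] (Δ : Set (Finset V)) {s : ℕ} (F : Fin s → Finset V) : Prop :=
  (∀ i, IsFacet Δ (F i)) ∧ (∀ G, IsFacet Δ G → ∃ i, F i = G) ∧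
  Function.Injective F ∧
  (∀ i j : Fin s, j < i → ∃ x ∈ F i \ F j, ∃ k, k < i ∧ F i \ F k = {x})

/-- A complex is shellable if it is pure and admits a shelling order of its facets. -/
def Shellable [DecidableEq V] (Δ : Set (Finset V)) : Prop :=
  IsPure Δ ∧ ∃ (s : ℕ) (F : Fin s → Finset V), IsShelling Δ F

/-- A pure complex is vertex decomposable if it is a simplex (unique facet), or some vertex
has pure, vertex decomposable deletion and link. -/
inductive VertexDecomposable [DecidableEq V] : Set (Finset V) → Prop
  | simplex (Δ : Set (Finset V)) (h : ∃! F, IsFacet Δ F) : VertexDecomposable Δ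
  | step (Δ : Set (Finset V)) (x : V)
      (hdp : IsPure (del Δ x)) (hlp : IsPure (link Δ x))
      (hd : VertexDecomposable (del Δ x)) (hl : VertexDecomposable (link Δ x)) :
      VertexDecomposable Δ

/-- The independence complex of a graph: all independent sets. -/
def indComplex (G : SimpleGraph V) : Set (Finset V) :=
  {F | ∀ v ∈ F, ∀ w ∈ F, ¬ G.Adj v w}

/-- The lexicographical product `G[H]`. -/
def lexProd {α β : Type*} (G : SimpleGraph α) (H : SimpleGraph β) :
    SimpleGraph (α × β) where
  Adj p q := G.Adj p.1 q.1 ∨ (p.1 = q.1 ∧ H.Adj p.2 q.2)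
  symm := by
    refine ⟨?_⟩
    rintro p q (h | ⟨h1, h2⟩)
    · exact Or.inl h.symm
    · exact Or.inr ⟨h1.symm, h2.symm⟩
  loopless := by
    refine ⟨?_⟩
    rintro p (h | ⟨_, h⟩)
    · exact G.irrefl h
    · exact H.irrefl h

/-- The independence number of a graph. -/
noncomputable def indepNum (G : SimpleGraph V) : ℕ :=
  sSup {n | ∃ F : Finset V, F ∈ indComplex G ∧ F.card = n}

/-- The expansion of a graph `G`, where vertex `v` is replaced by `s v` copies,
and distinct vertices `(i,j)` and `(k,l)` are adjacent iff `i ~ k` in `G` or `i = k`. -/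
def expansion (G : SimpleGraph V) (s : V → ℕ) : SimpleGraph (Σ v : V, Fin (s v)) where
  Adj p q := p ≠ q ∧ (G.Adj p.1 q.1 ∨ p.1 = q.1)
  symm := by
    refine ⟨?_⟩
    rintro p q ⟨h1, h2 | h2⟩
    · exact ⟨h1.symm, Or.inl h2.symm⟩
    · exact ⟨h1.symm, Or.inr h2.symm⟩
  loopless := by refine ⟨?_⟩; rintro p ⟨h, _⟩; exact h rfl

/-- The circulant graph `C_n(S)`: vertices `x_a`, `x_b` are adjacent iff
`|a-b| ∈ S` or `n - |a-b| ∈ S`. -/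
def circulant (n : ℕ) (S : Set ℕ) : SimpleGraph (Fin n) where
  Adj a b := a ≠ b ∧ ((max a.val b.val - min a.val b.val) ∈ S ∨
      (n - (max a.val b.val - min a.val b.val)) ∈ S)
  symm := by
    refine ⟨?_⟩
    rintro a b ⟨h1, h2⟩
    refine ⟨h1.symm, ?_⟩
    rwa [max_comm, min_comm]
  loopless := by refine ⟨?_⟩; rintro a ⟨h, _⟩; exact h rfl


/-- Auxiliary: the defining condition for the connection set of the product circulant. -/
def Ccond (n m : ℕ) (S₁ S₂ : Set ℕ) (s : ℕ) : Prop :=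
  (s % n ∈ S₁ ∨ n - s % n ∈ S₁) ∨
  (s % n = 0 ∧ (s / n % m ∈ S₂ ∨ m - s / n % m ∈ S₂))

/-- Auxiliary: the connection set itself. -/
def Sset (n m : ℕ) (S₁ S₂ : Set ℕ) : Set ℕ :=
  {s | (1 ≤ s ∧ s ≤ n * m / 2) ∧ Ccond n m S₁ S₂ s}

lemma enc_mod (n r t : ℕ) (hn : 0 < n) (hr : r < n) : (r + n * t) % n = r := by
  rw [Nat.add_mul_mod_self_left, Nat.mod_eq_of_lt hr]

lemma enc_div (n r t : ℕ) (hn : 0 < n) (hr : r < n) : (r + n * t) / n = t := by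
  rw [Nat.add_mul_div_left _ _ hn, Nat.div_eq_of_lt hr, Nat.zero_add]

lemma enc_lt (n m a b : ℕ) (ha : a < n) (hb : b < m) : a + n * b < n * m := by
  have h1 : n * (b + 1) ≤ n * m := Nat.mul_le_mul_left n hb
  have h2 : n * (b + 1) = n * b + n := by ring
  omega

lemma ccond_symm (n m : ℕ) (S₁ S₂ : Set ℕ) (hn : 0 < n) (s : ℕ) (h1 : 1 ≤ s)
    (h2 : s < n * m) : Ccond n m S₁ S₂ (n * m - s) ↔ Ccond n m S₁ S₂ s := by
  obtain ⟨q, r, hr, rfl⟩ : ∃ q r, r < n ∧ s = r + n * q :=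
    ⟨s / n, s % n, Nat.mod_lt _ hn, (Nat.mod_add_div s n).symm⟩
  have hq : q < m := by
    have h3 : n * q < n * m := by omega
    exact Nat.lt_of_mul_lt_mul_left h3
  by_cases hr0 : r = 0
  · subst hr0
    have hq1 : 0 < q := by
      rcases Nat.eq_zero_or_pos q with rfl | h
      · simp at h1
      · exact h
    have key : n * m - (0 + n * q) = 0 + n * (m - q) := by
      have h3 : n * (m - q) + n * q = n * m := by
        rw [← Nat.mul_add]; congr 1; omega
      omega
    rw [key]
    simp only [Ccond]
    rw [enc_mod n 0 (m - q) hn hn, enc_div n 0 (m - q) hn hn,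
      enc_mod n 0 q hn hn, enc_div n 0 q hn hn,
      Nat.mod_eq_of_lt hq, Nat.mod_eq_of_lt (show m - q < m by omega),
      show m - (m - q) = q by omega]
    tauto
  · have key : n * m - (r + n * q) = (n - r) + n * (m - q - 1) := by
      have h3 : n * (m - q - 1) + n * (q + 1) = n * m := by
        rw [← Nat.mul_add]; congr 1; omega
      have h4 : n * (q + 1) = n * q + n := by ring
      omega
    rw [key]
    simp only [Ccond]
    rw [enc_mod n (n - r) (m - q - 1) hn (by omega), enc_mod n r q hn hr,
      show n - (n - r) = r by omega]
    have hne1 : n - r ≠ 0 := by omega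
    tauto

lemma mem_iff (n m : ℕ) (S₁ S₂ : Set ℕ) (hn : 0 < n) (D : ℕ) (h1 : 1 ≤ D)
    (h2 : D < n * m) :
    (D ∈ Sset n m S₁ S₂ ∨ n * m - D ∈ Sset n m S₁ S₂) ↔ Ccond n m S₁ S₂ D := by
  have hsym := ccond_symm n m S₁ S₂ hn D h1 h2
  simp only [Sset, Set.mem_setOf_eq]
  constructor
  · rintro (⟨_, h⟩ | ⟨_, h⟩)
    · exact h
    · exact hsym.mp h
  · intro h
    by_cases hD : D ≤ n * m / 2
    · exact Or.inl ⟨⟨h1, hD⟩, h⟩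
    · exact Or.inr ⟨⟨by omega, by omega⟩, hsym.mpr h⟩

lemma main_lem (n m : ℕ) (S₁ S₂ : Set ℕ) (hn : 1 ≤ n) (hm : 1 ≤ m)
    (hS₁ : S₁ ⊆ Set.Icc 1 (n / 2))
    (a c b d : ℕ) (ha : a < n) (hc : c < n) (hb : b < m) (hd : d < m)
    (hlt : c + n * d < a + n * b) :
    Ccond n m S₁ S₂ (a + n * b - (c + n * d)) ↔
      ((¬ a = c ∧ (max a c - min a c ∈ S₁ ∨ n - (max a c - min a c) ∈ S₁)) ∨
       (a = c ∧ ¬ b = d ∧ (max b d - min b d ∈ S₂ ∨ m - (max b d - min b d) ∈ S₂))) := by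
  have h0 : (0 : ℕ) ∉ S₁ := by
    intro h; have := hS₁ h; rw [Set.mem_Icc] at this; omega
  have hnS : n ∉ S₁ := by
    intro h; have := hS₁ h; rw [Set.mem_Icc] at this; omega
  by_cases hbd : b = d
  · subst hbd
    have hac : c < a := by omega
    have hD : a + n * b - (c + n * b) = a - c := by omega
    rw [hD]
    simp only [Ccond]
    rw [Nat.mod_eq_of_lt (show a - c < n by omega),
      max_eq_left hac.le, min_eq_right hac.le]
    have f1 : ¬ a = c := by omega
    have f2 : ¬ (a - c = 0) := by omega
    have f3 : b = b := rfl
    tauto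
  · have hbd' : d < b := by
      by_contra hcon
      push_neg at hcon
      have hb' : b + 1 ≤ d := by omega
      have h3 : n * (b + 1) ≤ n * d := Nat.mul_le_mul_left n (by omega)
      have h4 : n * (b + 1) = n * b + n := by ring
      omega
    obtain ⟨t, rfl⟩ : ∃ t, b = d + t + 1 := ⟨b - d - 1, by omega⟩
    have hexp : n * (d + t + 1) = n * d + n * t + n := by ring
    have htm : t + 1 < m := by omega
    rcases lt_trichotomy a c with hac | rfl | hac
    · have hD : a + n * (d + t + 1) - (c + n * d) = (n - (c - a)) + n * t := by
        rw [hexp]; omega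
      rw [hD]
      simp only [Ccond]
      rw [enc_mod n (n - (c - a)) t hn (by omega),
        max_eq_right hac.le, min_eq_left hac.le,
        show n - (n - (c - a)) = c - a by omega]
      have f1 : ¬ a = c := by omega
      have f2 : ¬ (n - (c - a) = 0) := by omega
      tauto
    · have hD : a + n * (d + t + 1) - (a + n * d) = 0 + n * (t + 1) := by
        have h2 : n * (t + 1) = n * t + n := by ring
        rw [hexp, h2]; omega
      rw [hD]
      simp only [Ccond]
      rw [enc_mod n 0 (t + 1) hn hn, enc_div n 0 (t + 1) hn hn,
        Nat.mod_eq_of_lt htm,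
        max_eq_left (show d ≤ d + t + 1 by omega),
        min_eq_right (show d ≤ d + t + 1 by omega),
        show d + t + 1 - d = t + 1 by omega, Nat.sub_zero]
      have f1 : a = a := rfl
      have f2 : ¬ (d + t + 1 = d) := by omega
      have f3 : (0 : ℕ) = 0 := rfl
      tauto
    · have hD : a + n * (d + t + 1) - (c + n * d) = (a - c) + n * (t + 1) := by
        have h2 : n * (t + 1) = n * t + n := by ring
        rw [hexp, h2]; omega
      rw [hD]
      simp only [Ccond]
      rw [enc_mod n (a - c) (t + 1) hn (by omega),
        max_eq_left hac.le, min_eq_right hac.le]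
      have f1 : ¬ a = c := by omega
      have f2 : ¬ (a - c = 0) := by omega
      tauto

lemma main2 (n m : ℕ) (S₁ S₂ : Set ℕ) (hn : 1 ≤ n) (hm : 1 ≤ m)
    (hS₁ : S₁ ⊆ Set.Icc 1 (n / 2))
    (a c b d : ℕ) (ha : a < n) (hc : c < n) (hb : b < m) (hd : d < m)
    (hne : ¬ (a + n * b = c + n * d)) :
    Ccond n m S₁ S₂ (max (a + n * b) (c + n * d) - min (a + n * b) (c + n * d)) ↔
      ((¬ a = c ∧ (max a c - min a c ∈ S₁ ∨ n - (max a c - min a c) ∈ S₁)) ∨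
       (a = c ∧ ¬ b = d ∧ (max b d - min b d ∈ S₂ ∨ m - (max b d - min b d) ∈ S₂))) := by
  rcases lt_or_gt_of_ne hne with h | h
  · rw [max_eq_right h.le, min_eq_left h.le,
      main_lem n m S₁ S₂ hn hm hS₁ c a d b hc ha hd hb h,
      max_comm c a, min_comm c a, max_comm d b, min_comm d b]
    constructor
    · rintro (⟨h1, h2⟩ | ⟨h1, h2, h3⟩)
      · exact Or.inl ⟨fun hh => h1 hh.symm, h2⟩
      · exact Or.inr ⟨h1.symm, fun hh => h2 hh.symm, h3⟩
    · rintro (⟨h1, h2⟩ | ⟨h1, h2, h3⟩)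
      · exact Or.inl ⟨fun hh => h1 hh.symm, h2⟩
      · exact Or.inr ⟨h1.symm, fun hh => h2 hh.symm, h3⟩
  · rw [max_eq_left h.le, min_eq_right h.le]
    exact main_lem n m S₁ S₂ hn hm hS₁ a c b d ha hc hb hd h

/-- The encoding equivalence `Fin n × Fin m ≃ Fin (n*m)`. -/
def encEquiv (n m : ℕ) : Fin n × Fin m ≃ Fin (n * m) :=
  (Equiv.prodComm _ _).trans (finProdFinEquiv.trans (finCongr (mul_comm m n)))

lemma encEquiv_val (n m : ℕ) (a : Fin n) (b : Fin m) :
    (encEquiv n m (a, b) : ℕ) = a + n * b := by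
  simp [encEquiv, finProdFinEquiv]

lemma circulant_adj {N : ℕ} {S : Set ℕ} {x y : Fin N} :
    (circulant N S).Adj x y ↔ (x ≠ y ∧ ((max x.val y.val - min x.val y.val) ∈ S ∨
      (N - (max x.val y.val - min x.val y.val)) ∈ S)) := Iff.rfl

lemma lexProd_adj {α β : Type*} {G : SimpleGraph α} {H : SimpleGraph β} {p q : α × β} :
    (lexProd G H).Adj p q ↔ (G.Adj p.1 q.1 ∨ (p.1 = q.1 ∧ H.Adj p.2 q.2)) := Iff.rfl

theorem stmt16 (n m : ℕ) (hn : 1 ≤ n) (hm : 1 ≤ m) (S₁ S₂ : Set ℕ)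
    (hS₁ : S₁ ⊆ Set.Icc 1 (n / 2)) (hS₂ : S₂ ⊆ Set.Icc 1 (m / 2)) :
    ∃ S : Set ℕ, S ⊆ Set.Icc 1 (n * m / 2) ∧
      Nonempty (lexProd (circulant n S₁) (circulant m S₂) ≃g circulant (n * m) S) := by
  have hn0 : 0 < n := hn
  refine ⟨Sset n m S₁ S₂, ?_, ⟨⟨encEquiv n m, ?_⟩⟩⟩
  · rintro s ⟨⟨h1, h2⟩, _⟩
    exact Set.mem_Icc.mpr ⟨h1, h2⟩
  · intro p q
    obtain ⟨a, b⟩ := p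
    obtain ⟨c, d⟩ := q
    rw [circulant_adj, lexProd_adj, circulant_adj, circulant_adj]
    simp only [Ne, Fin.ext_iff, encEquiv_val]
    by_cases heq : (a : ℕ) + n * (b : ℕ) = (c : ℕ) + n * (d : ℕ)
    · have h1 : (a : ℕ) = c := by
        rw [← enc_mod n a b hn0 a.isLt, ← enc_mod n c d hn0 c.isLt, heq]
      have h2 : (b : ℕ) = d := by
        rw [← enc_div n a b hn0 a.isLt, ← enc_div n c d hn0 c.isLt, heq]
      simp [heq, h1, h2]
    · have hk1 : (a : ℕ) + n * b < n * m := enc_lt n m a b a.isLt b.isLt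
      have hk2 : (c : ℕ) + n * d < n * m := enc_lt n m c d c.isLt d.isLt
      have hD1 : 1 ≤ max ((a : ℕ) + n * b) ((c : ℕ) + n * d) -
          min ((a : ℕ) + n * b) ((c : ℕ) + n * d) := by omega
      have hD2 : max ((a : ℕ) + n * b) ((c : ℕ) + n * d) -
          min ((a : ℕ) + n * b) ((c : ℕ) + n * d) < n * m := by omega
      rw [mem_iff n m S₁ S₂ hn0 _ hD1 hD2,
        main2 n m S₁ S₂ hn hm hS₁ a c b d a.isLt c.isLt b.isLt d.isLt heq]
      tauto
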